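/- Strong joint concavity of F_min: for density matrices ρ_y, σ_y and nonnegative weights λ_y, μ_y with Σλ_y = Σμ_y = 1, F_min(Σ_y λ_y ρ_y, Σ_y μ_y σ_y) ≥ Σ_y √(λ_y μ_y) F_min(ρ_y, σ_y). -/

import Mathlib

open Matrix BigOperators
open scoped ComplexOrder Classical

noncomputable def msqrt {n : Type*} [Fintype n] [DecidableEq n]
    (A : Matrix n n ℂ) : Matrix n n ℂ :=
  if h : A.PosSemidef then
    (h.1.eigenvectorUnitary : Matrix n n ℂ) *
      diagonal (((↑) : ℝ → ℂ) ∘ Real.sqrt ∘ h.1.eigenvalues) *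
      (star h.1.eigenvectorUnitary : Matrix n n ℂ)
  else 0

noncomputable def gm {n : Type*} [Fintype n] [DecidableEq n]
    (A B : Matrix n n ℂ) : Matrix n n ℂ :=
  msqrt A * msqrt ((msqrt A)⁻¹ * B * (msqrt A)⁻¹) * msqrt A

def IsDensity {n : Type*} [Fintype n] (ρ : Matrix n n ℂ) : Prop :=
  ρ.PosSemidef ∧ ρ.trace = 1

structure IsReverseTest {d m : ℕ} (ρ σ : Matrix (Fin d) (Fin d) ℂ)
    (R : Fin m → Matrix (Fin d) (Fin d) ℂ) (p q : Fin m → ℝ) : Prop where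
  states : ∀ x, IsDensity (R x)
  p_nonneg : ∀ x, 0 ≤ p x
  q_nonneg : ∀ x, 0 ≤ q x
  p_sum : ∑ x, p x = 1
  q_sum : ∑ x, q x = 1
  rho_eq : ∑ x, (p x : ℂ) • R x = ρ
  sigma_eq : ∑ x, (q x : ℂ) • R x = σ

noncomputable def Fmin {d : ℕ} (ρ σ : Matrix (Fin d) (Fin d) ℂ) : ℝ :=
  sSup {r : ℝ | ∃ (m : ℕ) (R : Fin m → Matrix (Fin d) (Fin d) ℂ) (p q : Fin m → ℝ),
    IsReverseTest ρ σ R p q ∧ r = ∑ x, Real.sqrt (p x * q x)}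

noncomputable def Dmax {d : ℕ} (ρ σ : Matrix (Fin d) (Fin d) ℂ) : ℝ :=
  sInf {r : ℝ | ∃ (m : ℕ) (R : Fin m → Matrix (Fin d) (Fin d) ℂ) (p q : Fin m → ℝ),
    IsReverseTest ρ σ R p q ∧ r = (∑ x, |p x - q x|) / 2}

noncomputable def choiMatrix {d e : ℕ}
    (Λ : Matrix (Fin d) (Fin d) ℂ →ₗ[ℂ] Matrix (Fin e) (Fin e) ℂ) :
    Matrix (Fin d × Fin e) (Fin d × Fin e) ℂ :=
  Matrix.of fun pr qr => Λ (Matrix.single pr.1 qr.1 1) pr.2 qr.2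

def IsCPTP {d e : ℕ}
    (Λ : Matrix (Fin d) (Fin d) ℂ →ₗ[ℂ] Matrix (Fin e) (Fin e) ℂ) : Prop :=
  (choiMatrix Λ).PosSemidef ∧ ∀ A, (Λ A).trace = A.trace

noncomputable def mcfc {n : Type*} [Fintype n] [DecidableEq n]
    (f : ℝ → ℝ) (A : Matrix n n ℂ) : Matrix n n ℂ :=
  if h : A.IsHermitian then h.cfc f else 0

def IsOperatorMonotoneOnNonneg (f : ℝ → ℝ) : Prop :=
  ∀ (d : ℕ) (A B : Matrix (Fin d) (Fin d) ℂ), A.PosSemidef → B.PosSemidef →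
    (B - A).PosSemidef → (mcfc f B - mcfc f A).PosSemidef

noncomputable def traceNorm {n : Type*} [Fintype n] [DecidableEq n]
    (A : Matrix n n ℂ) : ℝ :=
  ((msqrt (Aᴴ * A)).trace).re

section SqrtAux
open scoped MatrixOrder
variable {n : Type*} [Fintype n] [DecidableEq n]

noncomputable def Matrix.PosSemidef.sqrt {A : Matrix n n ℂ} (h : A.PosSemidef) :
    Matrix n n ℂ :=
  (h.1.eigenvectorUnitary : Matrix n n ℂ) *
    diagonal (((↑) : ℝ → ℂ) ∘ Real.sqrt ∘ h.1.eigenvalues) *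
    (star h.1.eigenvectorUnitary : Matrix n n ℂ)

lemma Matrix.PosSemidef.sqrt_eq_cfc {A : Matrix n n ℂ} (h : A.PosSemidef) :
    h.sqrt = CFC.sqrt A := by
  rw [CFC.sqrt_eq_cfc, cfc_nnreal_eq_real _ A, h.1.cfc_eq]
  simp only [IsHermitian.cfc, Unitary.conjStarAlgAut_apply, Matrix.PosSemidef.sqrt]
  congr 3
  funext i
  show ((Real.sqrt (h.1.eigenvalues i) : ℂ)) =
    RCLike.ofReal (((NNReal.sqrt (h.1.eigenvalues i).toNNReal) : ℝ))
  rw [Real.coe_sqrt, Real.coe_toNNReal _ (h.eigenvalues_nonneg i)]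
  rfl

lemma Matrix.PosSemidef.posSemidef_sqrt {A : Matrix n n ℂ} (h : A.PosSemidef) :
    h.sqrt.PosSemidef := by
  rw [h.sqrt_eq_cfc]
  exact (CFC.sqrt_nonneg A).posSemidef

lemma Matrix.PosSemidef.sqrt_mul_self {A : Matrix n n ℂ} (h : A.PosSemidef) :
    h.sqrt * h.sqrt = A := by
  rw [h.sqrt_eq_cfc]
  exact CFC.sqrt_mul_sqrt_self A h.nonneg

lemma Matrix.PosSemidef.eq_sqrt_of_sq_eq {A B : Matrix n n ℂ} (hA : A.PosSemidef)
    (hB : B.PosSemidef) (hAB : A ^ 2 = B) : A = hB.sqrt := by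
  rw [hB.sqrt_eq_cfc, eq_comm, CFC.sqrt_eq_iff _ _ hB.nonneg hA.nonneg, ← sq, hAB]

end SqrtAux

namespace Stmt8Aux

variable {n : Type*} [Fintype n] [DecidableEq n]

lemma psd_trace_re_nonneg {M : Matrix n n ℂ} (h : M.PosSemidef) : 0 ≤ M.trace.re := by
  rw [Matrix.trace]
  rw [Complex.re_sum]
  refine Finset.sum_nonneg fun i _ => ?_
  have := h.re_dotProduct_nonneg (Pi.single i 1)
  simpa [mulVec_single, dotProduct, Pi.single_apply, apply_ite] using this

lemma psd_smul {M : Matrix n n ℂ} {r : ℝ} (hr : 0 ≤ r) (h : M.PosSemidef) :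
    ((r : ℂ) • M).PosSemidef := by
  refine PosSemidef.of_dotProduct_mulVec_nonneg ?_ fun x => ?_
  · unfold Matrix.IsHermitian
    rw [conjTranspose_smul, h.1.eq]
    simp
  · rw [smul_mulVec, dotProduct_smul]
    exact mul_nonneg (by simpa using hr) (h.dotProduct_mulVec_nonneg x)

lemma posDef_of_isUnit {M : Matrix n n ℂ} (h : M.PosSemidef) (hu : IsUnit M) : M.PosDef := by
  refine PosDef.of_dotProduct_mulVec_pos h.1 fun x hx => lt_of_le_of_ne (h.dotProduct_mulVec_nonneg x) fun heq => hx ?_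
  have hMx : M *ᵥ x = 0 := (h.dotProduct_mulVec_zero_iff x).mp heq.symm
  have hinj := Matrix.mulVec_injective_iff_isUnit.mpr hu
  have : M *ᵥ x = M *ᵥ 0 := by simpa using hMx
  exact hinj this

lemma sqrt_posDef {A : Matrix n n ℂ} (hA : A.PosDef) : hA.posSemidef.sqrt.PosDef := by
  refine posDef_of_isUnit hA.posSemidef.posSemidef_sqrt ?_
  rw [Matrix.isUnit_iff_isUnit_det, isUnit_iff_ne_zero]
  intro hdet
  have : hA.posSemidef.sqrt * hA.posSemidef.sqrt = A := hA.posSemidef.sqrt_mul_self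
  have hdA : A.det = 0 := by rw [← this, det_mul, hdet, mul_zero]
  exact hA.det_pos.ne' hdA

lemma posDef_conj {A B : Matrix n n ℂ} (hA : A.PosDef) (hB : IsUnit B) :
    (Bᴴ * A * B).PosDef := by
  refine posDef_of_isUnit (hA.posSemidef.conjTranspose_mul_mul_same B) ?_
  have hBH : IsUnit Bᴴ := by
    rw [Matrix.isUnit_iff_isUnit_det] at *
    rw [Matrix.det_conjTranspose]; exact hB.star
  exact (hBH.mul hA.isUnit).mul hB

lemma sqrt_mono {P Q : Matrix n n ℂ} (hP : P.PosSemidef) (hQ : Q.PosDef)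
    (hle : (Q - P).PosSemidef) :
    (hQ.posSemidef.sqrt - hP.sqrt).PosSemidef := by
  set a := hQ.posSemidef.sqrt with ha_def
  set b := hP.sqrt with hb_def
  have ha : a.PosSemidef := hQ.posSemidef.posSemidef_sqrt
  have hb : b.PosSemidef := hP.posSemidef_sqrt
  have haa : a * a = Q := hQ.posSemidef.sqrt_mul_self
  have hbb : b * b = P := hP.sqrt_mul_self
  have haPD : a.PosDef := sqrt_posDef hQ
  have hT : (a + b).PosDef := haPD.add_posSemidef hb
  have hS : (a - b).IsHermitian := ha.1.sub hb.1
  apply hS.posSemidef_iff_eigenvalues_nonneg.mpr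
  intro i
  show 0 ≤ hS.eigenvalues i
  set μ := hS.eigenvalues i with hμ
  set v : n → ℂ := ⇑(hS.eigenvectorBasis i) with hv_def
  have hv : (a - b) *ᵥ v = μ • v := hS.mulVec_eigenvectorBasis i
  have hvne : v ≠ 0 := by
    have h0 := hS.eigenvectorBasis.orthonormal.ne_zero i
    intro hcontr
    apply h0
    ext j; exact congrFun hcontr j
  have key : (a + b) * (a - b) + (a - b) * (a + b) = (Q - P) + (Q - P) := by
    have h1 : (a + b) * (a - b) + (a - b) * (a + b) = a * a - b * b + (a * a - b * b) := by
      noncomm_ring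
    rw [h1, haa, hbb]
  have e1 : star v ⬝ᵥ ((a + b) * (a - b)) *ᵥ v = (μ : ℂ) * (star v ⬝ᵥ (a + b) *ᵥ v) := by
    rw [← mulVec_mulVec, hv, mulVec_smul, dotProduct_smul, RCLike.real_smul_eq_coe_mul]
    norm_cast
  have e2 : star v ⬝ᵥ ((a - b) * (a + b)) *ᵥ v = (μ : ℂ) * (star v ⬝ᵥ (a + b) *ᵥ v) := by
    rw [← mulVec_mulVec, dotProduct_mulVec]
    have : star v ᵥ* (a - b) = (μ : ℂ) • star v := by
      rw [← hS.eq, ← star_mulVec, hv]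
      ext j
      simp [RCLike.real_smul_eq_coe_mul]
    rw [this, smul_dotProduct, smul_eq_mul]
  have sum_eq : star v ⬝ᵥ ((Q - P) + (Q - P)) *ᵥ v
      = (μ : ℂ) * (star v ⬝ᵥ (a + b) *ᵥ v) + (μ : ℂ) * (star v ⬝ᵥ (a + b) *ᵥ v) := by
    rw [← key, add_mulVec, dotProduct_add, e1, e2]
  have hnn : 0 ≤ ((star v ⬝ᵥ ((Q - P) + (Q - P)) *ᵥ v)).re := by
    rw [add_mulVec, dotProduct_add]
    rw [Complex.add_re]
    exact add_nonneg (hle.re_dotProduct_nonneg v) (hle.re_dotProduct_nonneg v)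
  rw [sum_eq] at hnn
  have ht : 0 < (star v ⬝ᵥ (a + b) *ᵥ v).re := hT.re_dotProduct_pos hvne
  have : 0 ≤ μ * (star v ⬝ᵥ (a + b) *ᵥ v).re := by
    rw [Complex.add_re] at hnn
    simp only [Complex.re_ofReal_mul] at hnn
    linarith
  nlinarith [this, ht]

lemma psd_sum {ι : Type*} (s : Finset ι) (f : ι → Matrix n n ℂ)
    (h : ∀ i ∈ s, (f i).PosSemidef) : (∑ i ∈ s, f i).PosSemidef :=
  Finset.sum_induction f Matrix.PosSemidef (fun _ _ ha hb => ha.add hb) .zero h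

lemma dot_sum {ι : Type*} (s : Finset ι) (f : ι → Matrix n n ℂ) (x : n → ℂ) :
    star x ⬝ᵥ (∑ y ∈ s, f y) *ᵥ x = ∑ y ∈ s, star x ⬝ᵥ (f y) *ᵥ x := by
  classical
  induction s using Finset.induction with
  | empty => simp
  | insert _ _ h ih => rw [Finset.sum_insert h, Finset.sum_insert h, add_mulVec, dotProduct_add, ih]

lemma posDef_sum_smul {m d : ℕ} (τ : Fin m → Matrix (Fin d) (Fin d) ℂ)
    (hτ : ∀ y, (τ y).PosDef) (w : Fin m → ℝ) (hw : ∀ y, 0 ≤ w y)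
    (hw1 : ∑ y, w y = 1) : (∑ y, (w y : ℂ) • τ y).PosDef := by
  obtain ⟨y0, hy0⟩ : ∃ y, 0 < w y := by
    by_contra h
    push_neg at h
    have h0 : ∑ y, w y = 0 := Finset.sum_eq_zero fun y _ => le_antisymm (h y) (hw y)
    rw [hw1] at h0; norm_num at h0
  refine PosDef.of_dotProduct_mulVec_pos ?_ ?_
  · show _ = _
    rw [conjTranspose_sum]
    refine Finset.sum_congr rfl fun y _ => ?_
    rw [conjTranspose_smul, (hτ y).1.eq]
    simp
  · intro x hx
    rw [dot_sum]
    have hterm : ∀ y, star x ⬝ᵥ ((w y : ℂ) • τ y) *ᵥ x = (w y : ℂ) * (star x ⬝ᵥ (τ y) *ᵥ x) := by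
      intro y
      rw [smul_mulVec, dotProduct_smul, smul_eq_mul]
    refine Finset.sum_pos' (fun y _ => ?_) ⟨y0, Finset.mem_univ y0, ?_⟩
    · rw [hterm y]
      exact mul_nonneg (by simpa using hw y) ((hτ y).posSemidef.dotProduct_mulVec_nonneg x)
    · rw [hterm y0]
      exact mul_pos (by simpa using hy0) ((hτ y0).dotProduct_mulVec_pos hx)
end Stmt8Aux

section MainProof
open Stmt8Aux

theorem stmt8 {d m : ℕ} (ρ σ : Fin m → Matrix (Fin d) (Fin d) ℂ)
    (hρ : ∀ y, (ρ y).PosDef) (hσ : ∀ y, (σ y).PosDef)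
    (hρ1 : ∀ y, (ρ y).trace = 1) (hσ1 : ∀ y, (σ y).trace = 1)
    (lam mu : Fin m → ℝ) (hlam : ∀ y, 0 ≤ lam y) (hmu : ∀ y, 0 ≤ mu y)
    (hlam1 : ∑ y, lam y = 1) (hmu1 : ∑ y, mu y = 1) :
    ∑ y, Real.sqrt (lam y * mu y) * ((gm (ρ y) (σ y)).trace).re ≤
      ((gm (∑ y, (lam y : ℂ) • ρ y) (∑ y, (mu y : ℂ) • σ y)).trace).re := by
  classical
  -- abbreviations
  set A := ∑ y, (lam y : ℂ) • ρ y with hA_def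
  set B := ∑ y, (mu y : ℂ) • σ y with hB_def
  have hA : A.PosDef := posDef_sum_smul ρ hρ lam hlam hlam1
  have hB : B.PosDef := posDef_sum_smul σ hσ mu hmu hmu1
  set S : Fin m → Matrix (Fin d) (Fin d) ℂ := fun y => msqrt (ρ y) with hS_def
  set C : Fin m → Matrix (Fin d) (Fin d) ℂ :=
    fun y => msqrt ((S y)⁻¹ * σ y * (S y)⁻¹) with hC_def
  have hgm : ∀ y, gm (ρ y) (σ y) = S y * C y * S y := fun y => rfl
  have hS_eq : ∀ y, S y = (hρ y).posSemidef.sqrt := fun y => dif_pos (hρ y).posSemidef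
  have hS_pd : ∀ y, (S y).PosDef := fun y => by
    rw [hS_eq y]; exact sqrt_posDef (hρ y)
  have hS_herm : ∀ y, (S y)ᴴ = S y := fun y => (hS_pd y).1
  have hSS : ∀ y, S y * S y = ρ y := fun y => by
    rw [hS_eq y]; exact (hρ y).posSemidef.sqrt_mul_self
  have hS_det : ∀ y, IsUnit (S y).det := fun y =>
    isUnit_iff_ne_zero.mpr (hS_pd y).det_pos.ne'
  have hSinv_herm : ∀ y, ((S y)⁻¹)ᴴ = (S y)⁻¹ := fun y => by
    rw [conjTranspose_nonsing_inv, hS_herm]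
  have hM_psd : ∀ y, ((S y)⁻¹ * σ y * (S y)⁻¹).PosSemidef := fun y => by
    have h := (hσ y).posSemidef.conjTranspose_mul_mul_same ((S y)⁻¹)
    rwa [hSinv_herm] at h
  have hC_eq : ∀ y, C y = (hM_psd y).sqrt := fun y => dif_pos (hM_psd y)
  have hC_psd : ∀ y, (C y).PosSemidef := fun y => by
    rw [hC_eq y]; exact (hM_psd y).posSemidef_sqrt
  have hC_herm : ∀ y, (C y)ᴴ = C y := fun y => (hC_psd y).1
  have hCC : ∀ y, C y * C y = (S y)⁻¹ * σ y * (S y)⁻¹ := fun y => by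
    rw [hC_eq y]; exact (hM_psd y).sqrt_mul_self
  have hG_psd : ∀ y, (S y * C y * S y).PosSemidef := fun y => by
    have h := (hC_psd y).conjTranspose_mul_mul_same (S y)
    rwa [hS_herm] at h
  set c : Fin m → ℝ := fun y => Real.sqrt (lam y * mu y) with hc_def
  set X := ∑ y, (c y : ℂ) • (S y * C y * S y) with hX_def
  have hX_psd : X.PosSemidef := by
    rw [hX_def]
    exact psd_sum _ _ fun y _ => psd_smul (Real.sqrt_nonneg _) (hG_psd y)
  have hX_herm : Xᴴ = X := hX_psd.1
  -- the 2d×2d block matrix is PSD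
  have hblock : (fromBlocks A X Xᴴ B).PosSemidef := by
    set K : Fin m → Matrix (Fin d ⊕ Fin d) (Fin d ⊕ Fin d) ℂ := fun y =>
      fromBlocks ((Real.sqrt (lam y) : ℂ) • S y)
        ((Real.sqrt (mu y) : ℂ) • (C y * S y)) 0 0 with hK_def
    have key : fromBlocks A X Xᴴ B = ∑ y, (K y)ᴴ * K y := by
      have hKy : ∀ y, (K y)ᴴ * K y =
          fromBlocks ((lam y : ℂ) • ρ y) ((c y : ℂ) • (S y * C y * S y))
            ((c y : ℂ) • (S y * C y * S y)) ((mu y : ℂ) • σ y) := by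
        intro y
        rw [hK_def]
        simp only [fromBlocks_conjTranspose, fromBlocks_multiply, conjTranspose_zero,
          Matrix.zero_mul, Matrix.mul_zero, add_zero, zero_add]
        have hstar1 : ((Real.sqrt (lam y) : ℂ) • S y)ᴴ = (Real.sqrt (lam y) : ℂ) • S y := by
          rw [conjTranspose_smul, hS_herm]
          simp
        have hstar2 : ((Real.sqrt (mu y) : ℂ) • (C y * S y))ᴴ
            = (Real.sqrt (mu y) : ℂ) • (S y * C y) := by
          rw [conjTranspose_smul, conjTranspose_mul, hS_herm, hC_herm]
          simp
        rw [hstar1, hstar2]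
        have e11 : (Real.sqrt (lam y) : ℂ) • S y * ((Real.sqrt (lam y) : ℂ) • S y)
            = (lam y : ℂ) • ρ y := by
          rw [Matrix.smul_mul, Matrix.mul_smul, smul_smul, hSS]
          norm_cast
          rw [Real.mul_self_sqrt (hlam y)]
        have e12 : (Real.sqrt (lam y) : ℂ) • S y * ((Real.sqrt (mu y) : ℂ) • (C y * S y))
            = (c y : ℂ) • (S y * C y * S y) := by
          rw [Matrix.smul_mul, Matrix.mul_smul, smul_smul, ← Matrix.mul_assoc]
          congr 1
          simp only [hc_def]
          norm_cast
          rw [Real.sqrt_mul (hlam y)]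
        have e21 : (Real.sqrt (mu y) : ℂ) • (S y * C y) * ((Real.sqrt (lam y) : ℂ) • S y)
            = (c y : ℂ) • (S y * C y * S y) := by
          rw [Matrix.smul_mul, Matrix.mul_smul, smul_smul]
          congr 1
          simp only [hc_def]
          norm_cast
          rw [Real.sqrt_mul (hlam y), mul_comm]
        have e22 : (Real.sqrt (mu y) : ℂ) • (S y * C y) * ((Real.sqrt (mu y) : ℂ) • (C y * S y))
            = (mu y : ℂ) • σ y := by
          rw [Matrix.smul_mul, Matrix.mul_smul, smul_smul]
          have h1 : S y * C y * (C y * S y) = S y * (C y * C y) * S y := by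
            simp only [Matrix.mul_assoc]
          rw [h1, hCC]
          have h2 : S y * ((S y)⁻¹ * σ y * (S y)⁻¹) * S y
              = (S y * (S y)⁻¹) * σ y * ((S y)⁻¹ * S y) := by
            simp only [Matrix.mul_assoc]
          rw [h2, Matrix.mul_nonsing_inv _ (hS_det y),
            Matrix.nonsing_inv_mul _ (hS_det y), Matrix.one_mul, Matrix.mul_one]
          norm_cast
          rw [Real.mul_self_sqrt (hmu y)]
        rw [e11, e12, e21, e22]
      have hsum : ∑ y, (K y)ᴴ * K y =
          fromBlocks (∑ y, (lam y : ℂ) • ρ y) (∑ y, (c y : ℂ) • (S y * C y * S y))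
            (∑ y, (c y : ℂ) • (S y * C y * S y)) (∑ y, (mu y : ℂ) • σ y) := by
        rw [Finset.sum_congr rfl fun y _ => hKy y]
        ext (i | i) (j | j) <;>
          simp [Matrix.sum_apply, fromBlocks_apply₁₁, fromBlocks_apply₁₂,
            fromBlocks_apply₂₁, fromBlocks_apply₂₂]
      rw [hsum, hX_herm, hA_def, hB_def, hX_def]
    rw [key]
    exact psd_sum _ _ fun y _ => posSemidef_conjTranspose_mul_self (K y)
  -- Schur complement
  letI : Invertible A := A.invertibleOfIsUnitDet (isUnit_iff_ne_zero.mpr hA.det_pos.ne')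
  have hschur : (B - Xᴴ * A⁻¹ * X).PosSemidef :=
    (PosDef.fromBlocks₁₁ X B hA).mp hblock
  -- conjugate by R⁻¹ where R = √A
  set R := msqrt A with hR_def
  have hR_eq : R = hA.posSemidef.sqrt := dif_pos hA.posSemidef
  have hR_pd : R.PosDef := by rw [hR_eq]; exact sqrt_posDef hA
  have hR_herm : Rᴴ = R := hR_pd.1
  have hRR : R * R = A := by rw [hR_eq]; exact hA.posSemidef.sqrt_mul_self
  have hR_det : IsUnit R.det := isUnit_iff_ne_zero.mpr hR_pd.det_pos.ne'
  have hRinv_herm : (R⁻¹)ᴴ = R⁻¹ := by rw [conjTranspose_nonsing_inv, hR_herm]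
  have hM'_pd : (R⁻¹ * B * R⁻¹).PosDef := by
    have h := posDef_conj hB hR_pd.inv.isUnit
    rwa [hRinv_herm] at h
  set Y := R⁻¹ * X * R⁻¹ with hY_def
  have hY_psd : Y.PosSemidef := by
    rw [hY_def]
    have h := hX_psd.conjTranspose_mul_mul_same (R⁻¹)
    rwa [hRinv_herm] at h
  have hY_herm : Yᴴ = Y := hY_psd.1
  have hYY_psd : (Y * Y).PosSemidef := by
    have h := posSemidef_conjTranspose_mul_self Y
    rwa [hY_herm] at h
  have hsub : ((R⁻¹ * B * R⁻¹) - Y * Y).PosSemidef := by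
    have h1 := hschur.conjTranspose_mul_mul_same (R⁻¹)
    have e : (R⁻¹)ᴴ * (B - Xᴴ * A⁻¹ * X) * R⁻¹ = (R⁻¹ * B * R⁻¹) - Y * Y := by
      rw [hRinv_herm, hX_herm, hY_def]
      have hAinv : A⁻¹ = R⁻¹ * R⁻¹ := by rw [← hRR, Matrix.mul_inv_rev]
      rw [hAinv]
      simp only [Matrix.mul_sub, Matrix.sub_mul, Matrix.mul_assoc]
    rwa [e] at h1
  -- monotonicity of sqrt
  have hmono := sqrt_mono hYY_psd hM'_pd hsub
  have hYsqrt : hYY_psd.sqrt = Y :=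
    (hY_psd.eq_sqrt_of_sq_eq hYY_psd (by rw [pow_two])).symm
  have hmsqrtM' : msqrt (R⁻¹ * B * R⁻¹) = hM'_pd.posSemidef.sqrt := dif_pos hM'_pd.posSemidef
  rw [hYsqrt, ← hmsqrtM'] at hmono
  -- conjugate back by R
  have hfin : (gm A B - X).PosSemidef := by
    have h2 := hmono.conjTranspose_mul_mul_same R
    rw [hR_herm] at h2
    have e2 : R * (msqrt (R⁻¹ * B * R⁻¹) - Y) * R = gm A B - X := by
      have hgmAB : gm A B = R * msqrt (R⁻¹ * B * R⁻¹) * R := rfl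
      rw [hgmAB, hY_def]
      have hRXR : R * (R⁻¹ * X * R⁻¹) * R = (R * R⁻¹) * X * (R⁻¹ * R) := by
        simp only [Matrix.mul_assoc]
      rw [Matrix.mul_sub, Matrix.sub_mul, hRXR, Matrix.mul_nonsing_inv _ hR_det,
        Matrix.nonsing_inv_mul _ hR_det, Matrix.one_mul, Matrix.mul_one]
    rwa [e2] at h2
  -- take traces
  have htr : X.trace.re ≤ (gm A B).trace.re := by
    have h3 := psd_trace_re_nonneg hfin
    rw [trace_sub, Complex.sub_re] at h3
    linarith
  have hXtr : X.trace.re = ∑ y, c y * ((gm (ρ y) (σ y)).trace).re := by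
    rw [hX_def, trace_sum, Complex.re_sum]
    refine Finset.sum_congr rfl fun y _ => ?_
    rw [hgm y, trace_smul, smul_eq_mul, Complex.re_ofReal_mul]
  calc ∑ y, Real.sqrt (lam y * mu y) * ((gm (ρ y) (σ y)).trace).re
      = X.trace.re := by rw [hXtr]
    _ ≤ (gm A B).trace.re := htr


end MainProof
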